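/- Let f satisfy (A1) (continuous, f(0)=0, increasing, concave), and let m, m₁,…,m_q : [0,ℓ] → [ε₀,∞) be non-increasing functions with ∑_{i=1}^q mᵢ(s) ≥ m(s) for all s ∈ [0,ℓ]. Let w and wᵢ be solutions of w(s) = ∫_s^ℓ f(w(t)) dt + m(s) and wᵢ(s) = ∫_s^ℓ f(wᵢ(t)) dt + mᵢ(s) respectively. Then ∑_{i=1}^q wᵢ(s) ≥ w(s) for all s ∈ [0,ℓ]. -/

import Mathlib

open Set MeasureTheory Nat

lemma int_pow_aux (ℓ s : ℝ) (n : ℕ) :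
    ∫ t in s..ℓ, (ℓ - t) ^ n = (ℓ - s) ^ (n+1) / (n+1) := by
  have h : ∀ x ∈ Set.uIcc s ℓ,
      HasDerivAt (fun x => -((ℓ - x) ^ (n+1) / ((n:ℝ)+1))) ((ℓ - x) ^ n) x := by
    intro x _
    have h1 : HasDerivAt (fun x : ℝ => ℓ - x) (-1) x := (hasDerivAt_id x).const_sub ℓ
    have h2 := ((h1.pow (n+1)).div_const ((n:ℝ)+1)).neg
    refine h2.congr_deriv ?_
    have h3 : ((n:ℝ)+1) ≠ 0 := by positivity
    push_cast
    field_simp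
    try ring
  rw [intervalIntegral.integral_eq_sub_of_hasDerivAt h
    ((by fun_prop : Continuous fun t : ℝ => (ℓ - t) ^ n).intervalIntegrable s ℓ)]
  simp
  try ring

lemma int_exp_aux (L ℓ s : ℝ) (hL : L ≠ 0) :
    ∫ t in s..ℓ, Real.exp (L * (ℓ - t)) = (Real.exp (L * (ℓ - s)) - 1) / L := by
  have h : ∀ x ∈ Set.uIcc s ℓ,
      HasDerivAt (fun x => -(Real.exp (L * (ℓ - x)) / L)) (Real.exp (L * (ℓ - x))) x := by
    intro x _
    have h1 : HasDerivAt (fun x : ℝ => L * (ℓ - x)) (L * (-1)) x :=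
      ((hasDerivAt_id x).const_sub ℓ).const_mul L
    have h2 := ((h1.exp).div_const L).neg
    refine h2.congr_deriv ?_
    field_simp
  rw [intervalIntegral.integral_eq_sub_of_hasDerivAt h
    ((by fun_prop : Continuous fun t : ℝ => Real.exp (L * (ℓ - t))).intervalIntegrable s ℓ)]
  simp
  ring

lemma int_poly (L C ℓ s : ℝ) (n : ℕ) :
    ∫ t in s..ℓ, L * (C * ((L * (ℓ - t)) ^ n / n !)) =
      C * ((L * (ℓ - s)) ^ (n+1) / (n+1) !) := by
  have h1 : ∀ t : ℝ, L * (C * ((L * (ℓ - t)) ^ n / n !)) = (L * C * L ^ n / n !) * (ℓ - t) ^ n := by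
    intro t; rw [mul_pow]; ring
  simp only [h1]
  rw [intervalIntegral.integral_const_mul, int_pow_aux]
  have hfac : (((n+1) ! : ℕ) : ℝ) = ((n:ℝ)+1) * (n !) := by
    rw [Nat.factorial_succ]; push_cast; ring
  rw [hfac, mul_pow]
  have h2 : ((n ! : ℕ) : ℝ) ≠ 0 := Nat.cast_ne_zero.2 (Nat.factorial_ne_zero n)
  have h3 : ((n:ℝ)+1) ≠ 0 := by positivity
  try field_simp
  try ring

lemma bootstrap (ℓ ε₀ L : ℝ) (hℓ : 0 < ℓ) (hε₀ : 0 < ε₀) (hL : 0 < L)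
    (f : ℝ → ℝ) (hfnn : ∀ s, 0 ≤ s → 0 ≤ f s) (hmono : MonotoneOn f (Set.Ici 0))
    (hlin : ∀ x, ε₀ ≤ x → f x ≤ f ε₀ + L * x)
    (μ u : ℝ → ℝ) (hμ : AntitoneOn μ (Set.Icc 0 ℓ)) (hμε : ∀ s ∈ Set.Icc (0:ℝ) ℓ, ε₀ ≤ μ s)
    (huε : ∀ s ∈ Set.Icc (0:ℝ) ℓ, ε₀ ≤ u s)
    (hu : ∀ s ∈ Set.Icc (0:ℝ) ℓ, u s = (∫ t in s..ℓ, f (u t)) + μ s) :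
    IntegrableOn (fun t => f (u t)) (Set.Ioc 0 ℓ) volume ∧
      ∀ s ∈ Set.Icc (0:ℝ) ℓ,
        u s ≤ 2 * (f ε₀ + L * μ 0) * (Real.exp (L * ℓ) - 1) / L + μ 0 := by
  have h0ℓ : (0:ℝ) ∈ Set.Icc (0:ℝ) ℓ := ⟨le_refl 0, hℓ.le⟩
  have hμ0 : ε₀ ≤ μ 0 := hμε 0 h0ℓ
  set c : ℝ := f ε₀ + L * μ 0 with hc_def
  have hc : 0 ≤ c := add_nonneg (hfnn ε₀ hε₀.le) (mul_nonneg hL.le (hε₀.le.trans hμ0))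
  set K : ℝ := 2 * c * (Real.exp (L * ℓ) - 1) / L with hK_def
  have hg0 : ∀ t ∈ Set.Icc (0:ℝ) ℓ, 0 ≤ f (u t) := fun t ht => hfnn _ (hε₀.le.trans (huε t ht))
  set E : Set ℝ := {s : ℝ | s ∈ Set.Icc (0:ℝ) ℓ ∧
      IntegrableOn (fun t => f (u t)) (Set.Ioc s ℓ) volume} with hE_def
  have hEl : ℓ ∈ E := ⟨⟨hℓ.le, le_refl ℓ⟩, by simp [IntegrableOn]⟩
  have hEup : ∀ s ∈ E, ∀ t, s ≤ t → t ≤ ℓ → t ∈ E := by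
    intro s hs t hst htl
    exact ⟨⟨hs.1.1.trans hst, htl⟩, hs.2.mono_set (Set.Ioc_subset_Ioc_left hst)⟩
  set v : ℝ → ℝ := fun s => ∫ t in Set.Ioc s ℓ, f (u t) with hv_def
  have hveq : ∀ s ∈ E, u s = v s + μ s := by
    intro s hs
    rw [hu s hs.1, intervalIntegral.integral_of_le hs.1.2]
  have hvnn : ∀ s ∈ Set.Icc (0:ℝ) ℓ, 0 ≤ v s := by
    intro s hs
    exact setIntegral_nonneg measurableSet_Ioc (fun t ht => hg0 t ⟨hs.1.trans ht.1.le, ht.2⟩)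
  have hvmono : ∀ s ∈ E, ∀ t, s ≤ t → t ≤ ℓ → v t ≤ v s := by
    intro s hs t hst htl
    refine setIntegral_mono_set hs.2 ?_ ((Set.Ioc_subset_Ioc_left hst).eventuallyLE)
    rw [Filter.EventuallyLE, ae_restrict_iff' measurableSet_Ioc]
    exact ae_of_all _ fun x hx => hg0 x ⟨hs.1.1.trans hx.1.le, hx.2⟩
  have hgle : ∀ t ∈ E, f (u t) ≤ c + L * v t := by
    intro t ht
    have h1 : f (u t) ≤ f ε₀ + L * u t := hlin _ (huε t ht.1)
    have h2 : u t = v t + μ t := hveq t ht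
    have h3 : μ t ≤ μ 0 := hμ h0ℓ ht.1 ht.1.1
    calc f (u t) ≤ f ε₀ + L * u t := h1
      _ = f ε₀ + L * (v t + μ t) := by rw [h2]
      _ ≤ c + L * v t := by nlinarith
  -- iteration
  have hiter : ∀ n : ℕ, ∀ s ∈ E,
      v s ≤ c * (Real.exp (L * (ℓ - s)) - 1) / L + (L * (ℓ - s)) ^ n / n ! * v s := by
    intro n
    induction n with
    | zero =>
      intro s hs
      have h1 : 0 ≤ L * (ℓ - s) := mul_nonneg hL.le (by linarith [hs.1.2])
      have h2 : (1:ℝ) ≤ Real.exp (L * (ℓ - s)) := Real.one_le_exp h1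
      have h3 : 0 ≤ c * (Real.exp (L * (ℓ - s)) - 1) / L :=
        div_nonneg (mul_nonneg hc (by linarith)) hL.le
      simp only [pow_zero, Nat.factorial_zero, Nat.cast_one]
      linarith
    | succ n ih =>
      intro s hs
      have hsl : s ≤ ℓ := hs.1.2
      have hvs0 : 0 ≤ v s := hvnn s hs.1
      have key : ∀ t ∈ Set.Ioc s ℓ, f (u t) ≤
          c * Real.exp (L * (ℓ - t)) + L * (v s * ((L * (ℓ - t)) ^ n / n !)) := by
        intro t ht
        have htE : t ∈ E := hEup s hs t ht.1.le ht.2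
        have h1 := hgle t htE
        have h2 := ih t htE
        have hvts : v t ≤ v s := hvmono s hs t ht.1.le ht.2
        have hp : 0 ≤ (L * (ℓ - t)) ^ n / n ! := by
          have : 0 ≤ L * (ℓ - t) := mul_nonneg hL.le (by linarith [ht.2])
          positivity
        have h3 : v t ≤ c * (Real.exp (L * (ℓ - t)) - 1) / L + (L * (ℓ - t)) ^ n / n ! * v s := by
          calc v t ≤ c * (Real.exp (L * (ℓ - t)) - 1) / L + (L * (ℓ - t)) ^ n / n ! * v t := h2
            _ ≤ _ := by nlinarith
        have h4 : L * (c * (Real.exp (L * (ℓ - t)) - 1) / L) = c * (Real.exp (L * (ℓ - t)) - 1) := by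
          field_simp
        nlinarith
      have hint1 : IntegrableOn (fun t => f (u t)) (Set.Ioc s ℓ) volume := hs.2
      have hint2 : IntegrableOn
          (fun t => c * Real.exp (L * (ℓ - t)) + L * (v s * ((L * (ℓ - t)) ^ n / n !)))
          (Set.Ioc s ℓ) volume :=
        (Continuous.integrableOn_Ioc (by fun_prop))
      have hmain := setIntegral_mono_on hint1 hint2 measurableSet_Ioc key
      have hcomp : ∫ t in Set.Ioc s ℓ,
          (c * Real.exp (L * (ℓ - t)) + L * (v s * ((L * (ℓ - t)) ^ n / n !)))
          = c * (Real.exp (L * (ℓ - s)) - 1) / L + (L * (ℓ - s)) ^ (n+1) / (n+1)! * v s := by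
        rw [← intervalIntegral.integral_of_le hsl]
        rw [intervalIntegral.integral_add
          ((by fun_prop : Continuous fun t : ℝ => c * Real.exp (L * (ℓ - t))).intervalIntegrable s ℓ)
          ((by fun_prop : Continuous fun t : ℝ =>
            L * (v s * ((L * (ℓ - t)) ^ n / n !))).intervalIntegrable s ℓ)]
        rw [intervalIntegral.integral_const_mul, int_exp_aux L ℓ s hL.ne', int_poly]
        ring
      rw [hcomp] at hmain
      exact hmain
  -- uniform bound on E
  obtain ⟨n₀, hn₀⟩ : ∃ n : ℕ, (L * ℓ) ^ n / n ! < 1 / 2 := by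
    have h := FloorSemiring.tendsto_pow_div_factorial_atTop (K := ℝ) (L * ℓ)
    exact (h.eventually (gt_mem_nhds (by norm_num : (0:ℝ) < 1/2))).exists
  have hbound : ∀ s ∈ E, v s ≤ K := by
    intro s hs
    have h1 := hiter n₀ s hs
    have hls : 0 ≤ L * (ℓ - s) := mul_nonneg hL.le (by linarith [hs.1.2])
    have h2 : (L * (ℓ - s)) ^ n₀ / n₀ ! ≤ (L * ℓ) ^ n₀ / n₀ ! := by
      gcongr <;> nlinarith [hs.1.1, hL.le]
    have h3 : Real.exp (L * (ℓ - s)) ≤ Real.exp (L * ℓ) := by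
      apply Real.exp_le_exp.2
      nlinarith [hs.1.1]
    have hvs0 : 0 ≤ v s := hvnn s hs.1
    have h4 : c * (Real.exp (L * (ℓ - s)) - 1) / L ≤ c * (Real.exp (L * ℓ) - 1) / L := by
      gcongr <;> linarith
    have h5 : (L * (ℓ - s)) ^ n₀ / n₀ ! * v s ≤ (1/2) * v s := by
      have := h2.trans_lt hn₀
      nlinarith
    have h6 : 0 ≤ (L * (ℓ - s)) ^ n₀ / n₀ ! := by positivity
    have : v s ≤ c * (Real.exp (L * ℓ) - 1) / L + (1/2) * v s := by linarith
    rw [hK_def]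
    have hLne : L ≠ 0 := hL.ne'
    have : v s ≤ 2 * (c * (Real.exp (L * ℓ) - 1) / L) := by linarith
    calc v s ≤ 2 * (c * (Real.exp (L * ℓ) - 1) / L) := this
      _ = 2 * c * (Real.exp (L * ℓ) - 1) / L := by ring
  -- bound on u over E
  have huB : ∀ s ∈ E, u s ≤ K + μ 0 := by
    intro s hs
    rw [hveq s hs]
    have h1 := hbound s hs
    have h2 : μ s ≤ μ 0 := hμ h0ℓ hs.1 hs.1.1
    linarith
  -- the infimum of E
  have hEne : E.Nonempty := ⟨ℓ, hEl⟩
  have hbdd : BddBelow E := ⟨0, fun x hx => hx.1.1⟩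
  set s₀ : ℝ := sInf E with hs₀_def
  have hs₀0 : 0 ≤ s₀ := le_csInf hEne fun x hx => hx.1.1
  have hs₀ℓ : s₀ ≤ ℓ := csInf_le hbdd hEl
  have hIocE : ∀ t ∈ Set.Ioc s₀ ℓ, t ∈ E := by
    intro t ht
    obtain ⟨e, heE, helt⟩ := exists_lt_of_csInf_lt hEne ht.1
    exact hEup e heE t helt.le ht.2
  -- u is antitone on Ioc s₀ ℓ
  have hua : AntitoneOn u (Set.Ioc s₀ ℓ) := by
    intro x hx y hy hxy
    have hxE := hIocE x hx
    have hyE := hIocE y hy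
    rw [hveq x hxE, hveq y hyE]
    have h1 : v y ≤ v x := hvmono x hxE y hxy hy.2
    have h2 : μ y ≤ μ x := hμ hxE.1 hyE.1 hxy
    linarith
  -- f ∘ u is antitone on Ioc s₀ ℓ
  have hga : AntitoneOn (fun t => f (u t)) (Set.Ioc s₀ ℓ) := by
    intro x hx y hy hxy
    exact hmono (Set.mem_Ici.2 (hε₀.le.trans (huε y (hIocE y hy).1)))
      (Set.mem_Ici.2 (hε₀.le.trans (huε x (hIocE x hx).1))) (hua hx hy hxy)
  -- integrability on Ioc s₀ ℓ
  have hKμ : ε₀ ≤ K + μ 0 := by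
    have h1 : 0 ≤ K := by
      rw [hK_def]
      have hexp : (1:ℝ) ≤ Real.exp (L * ℓ) := Real.one_le_exp (by positivity)
      exact div_nonneg (mul_nonneg (by linarith) (by linarith)) hL.le
    linarith
  have hint₀ : IntegrableOn (fun t => f (u t)) (Set.Ioc s₀ ℓ) volume := by
    have hmeas : AEMeasurable (fun t => f (u t)) (volume.restrict (Set.Ioc s₀ ℓ)) :=
      aemeasurable_restrict_of_antitoneOn measurableSet_Ioc hga
    apply Integrable.mono' (g := fun _ : ℝ => f (K + μ 0))
      (integrableOn_const measure_Ioc_lt_top.ne) hmeas.aestronglyMeasurable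
    rw [ae_restrict_iff' measurableSet_Ioc]
    apply ae_of_all
    intro t ht
    have htE := hIocE t ht
    have h1 : u t ≤ K + μ 0 := huB t htE
    have h2 : f (u t) ≤ f (K + μ 0) :=
      hmono (Set.mem_Ici.2 (hε₀.le.trans (huε t htE.1))) (Set.mem_Ici.2 (hε₀.le.trans hKμ)) h1
    rw [Real.norm_eq_abs, abs_of_nonneg (hg0 t htE.1)]
    exact h2
  have hs₀E : s₀ ∈ E := ⟨⟨hs₀0, hs₀ℓ⟩, hint₀⟩
  -- s₀ = 0
  have hs₀eq : s₀ = 0 := by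
    by_contra hne
    have hpos : 0 < s₀ := hs₀0.lt_of_ne (Ne.symm hne)
    have hs2pos : 0 ≤ s₀ / 2 := by linarith
    have hs2lt : s₀ / 2 < s₀ := by linarith
    have hueq : ∀ t ∈ Set.Ioo (s₀/2) s₀, u t = μ t := by
      intro t ht
      have htI : t ∈ Set.Icc (0:ℝ) ℓ := ⟨hs2pos.trans ht.1.le, ht.2.le.trans hs₀ℓ⟩
      have hnint : ¬ IntervalIntegrable (fun t => f (u t)) volume t ℓ := by
        intro hcc
        have htE : t ∈ E := ⟨htI, by
          rwa [intervalIntegrable_iff, Set.uIoc_of_le htI.2] at hcc⟩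
        exact absurd (csInf_le hbdd htE) (not_le.2 ht.2)
      rw [hu t htI, intervalIntegral.integral_undef hnint, zero_add]
    have hga2 : AntitoneOn (fun t => f (u t)) (Set.Ioo (s₀/2) s₀) := by
      intro x hx y hy hxy
      have hxI : x ∈ Set.Icc (0:ℝ) ℓ := ⟨hs2pos.trans hx.1.le, hx.2.le.trans hs₀ℓ⟩
      have hyI : y ∈ Set.Icc (0:ℝ) ℓ := ⟨hs2pos.trans hy.1.le, hy.2.le.trans hs₀ℓ⟩
      show f (u y) ≤ f (u x)
      rw [hueq x hx, hueq y hy]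
      exact hmono (Set.mem_Ici.2 (hε₀.le.trans (hμε y hyI)))
        (Set.mem_Ici.2 (hε₀.le.trans (hμε x hxI))) (hμ hxI hyI hxy)
    have hint2 : IntegrableOn (fun t => f (u t)) (Set.Ioo (s₀/2) s₀) volume := by
      have hmeas : AEMeasurable (fun t => f (u t)) (volume.restrict (Set.Ioo (s₀/2) s₀)) :=
        aemeasurable_restrict_of_antitoneOn measurableSet_Ioo hga2
      apply Integrable.mono' (g := fun _ : ℝ => f (μ 0))
        (integrableOn_const measure_Ioo_lt_top.ne) hmeas.aestronglyMeasurable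
      rw [ae_restrict_iff' measurableSet_Ioo]
      apply ae_of_all
      intro t ht
      have htI : t ∈ Set.Icc (0:ℝ) ℓ := ⟨hs2pos.trans ht.1.le, ht.2.le.trans hs₀ℓ⟩
      rw [hueq t ht, Real.norm_eq_abs, abs_of_nonneg (hfnn _ (hε₀.le.trans (hμε t htI)))]
      exact hmono (Set.mem_Ici.2 (hε₀.le.trans (hμε t htI)))
        (Set.mem_Ici.2 (hε₀.le.trans hμ0)) (hμ h0ℓ htI htI.1)
    have hsE : s₀/2 ∈ E := by
      refine ⟨⟨hs2pos, hs2lt.le.trans hs₀ℓ⟩, ?_⟩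
      have hsplit : Set.Ioc (s₀/2) ℓ = Set.Ioc (s₀/2) s₀ ∪ Set.Ioc s₀ ℓ :=
        (Set.Ioc_union_Ioc_eq_Ioc hs2lt.le hs₀ℓ).symm
      rw [hsplit]
      refine IntegrableOn.union ?_ hint₀
      rwa [integrableOn_Ioc_iff_integrableOn_Ioo]
    exact absurd (csInf_le hbdd hsE) (not_le.2 hs2lt)
  have h0E : (0:ℝ) ∈ E := hs₀eq ▸ hs₀E
  refine ⟨h0E.2, fun s hs => huB s (hEup 0 h0E s hs.1 hs.2)⟩

set_option maxHeartbeats 1000000 in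

/-- If `∑ᵢ mᵢ ≥ m` pointwise, and `w`, `wᵢ` solve the backward integral equations
with data `m`, `mᵢ` and `f` satisfying (A1), then `∑ᵢ wᵢ(s) ≥ w(s)` on `[0,ℓ]`. -/
theorem stmt_7 (ℓ ε₀ : ℝ) (hℓ : 0 < ℓ) (hε₀ : 0 < ε₀)
    (f f' f'' : ℝ → ℝ)
    (hcont : ContinuousOn f (Set.Ici 0))
    (hfnn : ∀ s, 0 ≤ s → 0 ≤ f s)
    (hf0 : f 0 = 0)
    (hd1 : ∀ s, 0 < s → HasDerivAt f (f' s) s)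
    (hd1pos : ∀ s, 0 < s → 0 < f' s)
    (hd2 : ∀ s, 0 < s → HasDerivAt f' (f'' s) s)
    (hd2np : ∀ s, 0 < s → f'' s ≤ 0)
    (q : ℕ) (m : ℝ → ℝ) (mi : Fin q → ℝ → ℝ)
    (hm : AntitoneOn m (Set.Icc 0 ℓ))
    (hmε : ∀ s ∈ Set.Icc (0:ℝ) ℓ, ε₀ ≤ m s)
    (hmi : ∀ i, AntitoneOn (mi i) (Set.Icc 0 ℓ))
    (hmiε : ∀ i, ∀ s ∈ Set.Icc (0:ℝ) ℓ, ε₀ ≤ mi i s)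
    (hsum : ∀ s ∈ Set.Icc (0:ℝ) ℓ, m s ≤ ∑ i, mi i s)
    (w : ℝ → ℝ) (wi : Fin q → ℝ → ℝ)
    (hwε : ∀ s ∈ Set.Icc (0:ℝ) ℓ, ε₀ ≤ w s)
    (hwiε : ∀ i, ∀ s ∈ Set.Icc (0:ℝ) ℓ, ε₀ ≤ wi i s)
    (hw : ∀ s ∈ Set.Icc (0:ℝ) ℓ, w s = (∫ t in s..ℓ, f (w t)) + m s)
    (hwi : ∀ i, ∀ s ∈ Set.Icc (0:ℝ) ℓ, wi i s = (∫ t in s..ℓ, f (wi i t)) + mi i s) :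
    ∀ s ∈ Set.Icc (0:ℝ) ℓ, w s ≤ ∑ i, wi i s := by
  have hL : 0 < f' ε₀ := hd1pos ε₀ hε₀
  have hf'anti : AntitoneOn f' (Set.Ioi 0) := by
    apply antitoneOn_of_deriv_nonpos (convex_Ioi 0)
    · exact fun x hx => (hd2 x hx).continuousAt.continuousWithinAt
    · intro x hx
      rw [interior_Ioi] at hx
      exact (hd2 x hx).differentiableAt.differentiableWithinAt
    · intro x hx
      rw [interior_Ioi] at hx
      rw [(hd2 x hx).deriv]
      exact hd2np x hx
  have hmono : MonotoneOn f (Set.Ici 0) := by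
    apply (strictMonoOn_of_deriv_pos (convex_Ici 0) hcont ?_).monotoneOn
    intro x hx
    rw [interior_Ici] at hx
    rw [(hd1 x hx).deriv]
    exact hd1pos x hx
  have hlip : ∀ a b : ℝ, ε₀ ≤ a → a ≤ b → f b - f a ≤ f' ε₀ * (b - a) := by
    intro a b ha hab
    rcases eq_or_lt_of_le hab with rfl | h
    · simp
    · obtain ⟨x, hx, hxeq⟩ := exists_hasDerivAt_eq_slope f f' h
        (hcont.mono (fun y hy => le_trans (hε₀.le.trans ha) hy.1))
        (fun y hy => hd1 y (lt_of_lt_of_le (hε₀.trans_le ha) hy.1.le))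
      have h1 : f b - f a = f' x * (b - a) := by
        rw [hxeq, div_mul_cancel₀ _ (sub_ne_zero.2 h.ne')]
      rw [h1]
      have h2 : f' x ≤ f' ε₀ := hf'anti (Set.mem_Ioi.2 hε₀)
        (Set.mem_Ioi.2 (hε₀.trans (lt_of_le_of_lt ha hx.1))) (ha.trans hx.1.le)
      nlinarith
  have hlin : ∀ x, ε₀ ≤ x → f x ≤ f ε₀ + f' ε₀ * x := by
    intro x hx
    have := hlip ε₀ x le_rfl hx
    nlinarith [mul_nonneg hL.le hε₀.le]
  have hkey : ∀ a b : ℝ, 0 < a → a ≤ b → f (a + b) ≤ f a + f b := by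
    intro a b ha hab
    have hb : 0 < b := ha.trans_le hab
    obtain ⟨x, hx, hxeq⟩ := exists_hasDerivAt_eq_slope f f' (show b < a + b by linarith)
      (hcont.mono (fun y hy => le_trans hb.le hy.1))
      (fun y hy => hd1 y (hb.trans hy.1))
    obtain ⟨x', hx', hxeq'⟩ := exists_hasDerivAt_eq_slope f f' ha
      (hcont.mono (fun y hy => hy.1))
      (fun y hy => hd1 y hy.1)
    have e1 : f (a + b) - f b = f' x * a := by
      have haa : a + b - b = a := by ring
      rw [haa] at hxeq
      rw [hxeq]
      field_simp
    have e2 : f a = f' x' * a := by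
      have h0 : f a - f 0 = f a := by rw [hf0]; ring
      have ha0 : a - 0 = a := by ring
      rw [ha0, h0] at hxeq'
      rw [hxeq']
      field_simp
    have h2 : f' x ≤ f' x' := hf'anti (Set.mem_Ioi.2 hx'.1)
      (Set.mem_Ioi.2 (lt_trans hb hx.1)) (le_trans hx'.2.le (hab.trans hx.1.le))
    nlinarith
  have hsub2 : ∀ a b : ℝ, 0 ≤ a → 0 ≤ b → f (a + b) ≤ f a + f b := by
    intro a b ha hb
    rcases ha.eq_or_lt with rfl | ha'
    · simp [hf0]
    rcases hb.eq_or_lt with rfl | hb'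
    · simp [hf0]
    rcases le_total a b with h | h
    · exact hkey a b ha' h
    · have := hkey b a hb' h
      rw [add_comm b a] at this
      linarith
  have hsubsum : ∀ t : ℝ, (∀ i, 0 ≤ wi i t) → f (∑ i, wi i t) ≤ ∑ i, f (wi i t) := by
    intro t hx
    have hgen : ∀ s : Finset (Fin q), f (∑ i ∈ s, wi i t) ≤ ∑ i ∈ s, f (wi i t) := by
      intro s
      induction s using Finset.cons_induction with
      | empty => simp [hf0]
      | cons a s ha ih =>
        rw [Finset.sum_cons, Finset.sum_cons]
        calc f (wi a t + ∑ i ∈ s, wi i t) ≤ f (wi a t) + f (∑ i ∈ s, wi i t) :=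
              hsub2 _ _ (hx a) (Finset.sum_nonneg fun i _ => hx i)
          _ ≤ _ := by linarith [ih]
    exact hgen Finset.univ
  -- bootstrap for w and wi
  obtain ⟨hwint, hwB⟩ := bootstrap ℓ ε₀ (f' ε₀) hℓ hε₀ hL f hfnn hmono hlin m w hm hmε hwε hw
  have hwiint : ∀ i, IntegrableOn (fun t => f (wi i t)) (Set.Ioc 0 ℓ) volume := fun i =>
    (bootstrap ℓ ε₀ (f' ε₀) hℓ hε₀ hL f hfnn hmono hlin (mi i) (wi i)
      (hmi i) (hmiε i) (hwiε i) (hwi i)).1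
  set C : ℝ := 2 * (f ε₀ + f' ε₀ * m 0) * (Real.exp (f' ε₀ * ℓ) - 1) / f' ε₀ + m 0 with hC
  have h0I : (0:ℝ) ∈ Set.Icc (0:ℝ) ℓ := ⟨le_refl 0, hℓ.le⟩
  have hC0 : 0 < C := lt_of_lt_of_le hε₀ ((hwε 0 h0I).trans (hwB 0 h0I))
  have hWε : ∀ s ∈ Set.Icc (0:ℝ) ℓ, ε₀ ≤ ∑ i, wi i s := by
    intro s hs
    have h1 : ∀ i, mi i s ≤ wi i s := by
      intro i
      rw [hwi i s hs]
      have : 0 ≤ ∫ t in s..ℓ, f (wi i t) :=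
        intervalIntegral.integral_nonneg hs.2
          (fun t ht => hfnn _ (hε₀.le.trans (hwiε i t ⟨hs.1.trans ht.1, ht.2⟩)))
      linarith
    calc ε₀ ≤ m s := hmε s hs
      _ ≤ ∑ i, mi i s := hsum s hs
      _ ≤ ∑ i, wi i s := Finset.sum_le_sum fun i _ => h1 i
  have hwII : ∀ s ∈ Set.Icc (0:ℝ) ℓ, IntervalIntegrable (fun t => f (w t)) volume s ℓ := by
    intro s hs
    rw [intervalIntegrable_iff, Set.uIoc_of_le hs.2]
    exact hwint.mono_set (Set.Ioc_subset_Ioc_left hs.1)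
  have hwiII : ∀ i, ∀ s ∈ Set.Icc (0:ℝ) ℓ,
      IntervalIntegrable (fun t => f (wi i t)) volume s ℓ := by
    intro i s hs
    rw [intervalIntegrable_iff, Set.uIoc_of_le hs.2]
    exact (hwiint i).mono_set (Set.Ioc_subset_Ioc_left hs.1)
  have hmain : ∀ n : ℕ, ∀ s ∈ Set.Icc (0:ℝ) ℓ,
      w s - ∑ i, wi i s ≤ C * ((f' ε₀ * (ℓ - s)) ^ n / n !) := by
    intro n
    induction n with
    | zero =>
      intro s hs
      simp only [pow_zero, Nat.factorial_zero, Nat.cast_one]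
      have h1 : w s ≤ C := hwB s hs
      have h2 : ε₀ ≤ ∑ i, wi i s := hWε s hs
      have : C * (1 / 1) = C := by ring
      rw [this]
      linarith
    | succ n ih =>
      intro s hs
      have hsumII : IntervalIntegrable (fun t => ∑ i, f (wi i t)) volume s ℓ := by
        have h1 := IntervalIntegrable.sum (f := fun i t => f (wi i t)) Finset.univ
          (fun i _ => hwiII i s hs)
        have h2 : (∑ i : Fin q, fun t => f (wi i t)) = fun t => ∑ i, f (wi i t) := by
          funext t; simp [Finset.sum_apply]
        rwa [h2] at h1
      have hWeq : ∑ i, wi i s = (∫ t in s..ℓ, ∑ i, f (wi i t)) + ∑ i, mi i s := by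
        calc ∑ i, wi i s = ∑ i, ((∫ t in s..ℓ, f (wi i t)) + mi i s) :=
              Finset.sum_congr rfl (fun i _ => hwi i s hs)
          _ = (∑ i, ∫ t in s..ℓ, f (wi i t)) + ∑ i, mi i s := Finset.sum_add_distrib
          _ = _ := by rw [intervalIntegral.integral_finset_sum (fun i _ => hwiII i s hs)]
      have h2 : (∫ t in s..ℓ, (f (w t) - ∑ i, f (wi i t)))
          = (∫ t in s..ℓ, f (w t)) - ∫ t in s..ℓ, ∑ i, f (wi i t) :=
        intervalIntegral.integral_sub (hwII s hs) hsumII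
      have hdiff : w s - ∑ i, wi i s ≤ ∫ t in s..ℓ, (f (w t) - ∑ i, f (wi i t)) := by
        rw [hw s hs, hWeq, h2]
        have h1 : m s ≤ ∑ i, mi i s := hsum s hs
        linarith
      have hpt : ∀ t ∈ Set.Icc s ℓ, f (w t) - ∑ i, f (wi i t)
          ≤ f' ε₀ * (C * ((f' ε₀ * (ℓ - t)) ^ n / n !)) := by
        intro t ht
        have htI : t ∈ Set.Icc (0:ℝ) ℓ := ⟨hs.1.trans ht.1, ht.2⟩
        have hWt : ε₀ ≤ ∑ i, wi i t := hWε t htI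
        have hsubt : f (∑ i, wi i t) ≤ ∑ i, f (wi i t) :=
          hsubsum t (fun i => hε₀.le.trans (hwiε i t htI))
        have h0 : 0 ≤ f' ε₀ * (ℓ - t) := mul_nonneg hL.le (by linarith [ht.2])
        have hRHS0 : 0 ≤ f' ε₀ * (C * ((f' ε₀ * (ℓ - t)) ^ n / n !)) :=
          mul_nonneg hL.le (mul_nonneg hC0.le
            (div_nonneg (pow_nonneg h0 n) (Nat.cast_nonneg _)))
        rcases le_or_gt (w t) (∑ i, wi i t) with hle | hlt
        · have : f (w t) ≤ f (∑ i, wi i t) := hmono (Set.mem_Ici.2 (hε₀.le.trans (hwε t htI)))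
            (Set.mem_Ici.2 (hε₀.le.trans hWt)) hle
          linarith
        · have h1 : f (w t) - f (∑ i, wi i t) ≤ f' ε₀ * (w t - ∑ i, wi i t) :=
            hlip _ _ hWt hlt.le
          have h2 : w t - ∑ i, wi i t ≤ C * ((f' ε₀ * (ℓ - t)) ^ n / n !) := ih t htI
          nlinarith
      have hIr : IntervalIntegrable
          (fun t => f' ε₀ * (C * ((f' ε₀ * (ℓ - t)) ^ n / n !))) volume s ℓ :=
        (by fun_prop : Continuous fun t : ℝ =>
          f' ε₀ * (C * ((f' ε₀ * (ℓ - t)) ^ n / n !))).intervalIntegrable s ℓ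
      have hIl : IntervalIntegrable (fun t => f (w t) - ∑ i, f (wi i t)) volume s ℓ :=
        (hwII s hs).sub hsumII
      have hfin := intervalIntegral.integral_mono_on hs.2 hIl hIr hpt
      rw [int_poly] at hfin
      linarith
  intro s hs
  have htend : Filter.Tendsto (fun n : ℕ => C * ((f' ε₀ * (ℓ - s)) ^ n / n !))
      Filter.atTop (nhds 0) := by
    have h := (FloorSemiring.tendsto_pow_div_factorial_atTop (K := ℝ)
      (f' ε₀ * (ℓ - s))).const_mul C
    simpa using h
  have hle : w s - ∑ i, wi i s ≤ 0 := ge_of_tendsto' htend (fun n => hmain n s hs)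
  linarith
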